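/- Let K ∈ B(H) have closed range and let {Λ_ω} be a c-K-g-frame with frame operator S (defined weakly by ⟨Sf,g⟩ = ∫_Ω ⟨f, Λ_ω*Λ_ω g⟩ dμ(ω)). Then the restriction of S to R(K), as an operator from R(K) to S(R(K)), is positive, self-adjoint in the quadratic-form sense, and bounded below: ⟨Sf, f⟩ ≥ A‖K* f‖² ≥ (A/‖K†‖²)‖f‖² for all f ∈ R(K), where K† is the pseudo-inverse of K; in particular S|_{R(K)} is injective. -/

import Mathlib

open MeasureTheory ContinuousLinearMap

local notation "⟪" x ", " y "⟫" => @inner ℂ _ _ x y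

/-- For a c-K-g-frame with `K` of closed range, the frame operator `S` restricted to
`R(K)` is positive, self-adjoint in the quadratic-form sense, bounded below:
`⟨Sf, f⟩ ≥ A‖K* f‖² ≥ (A/‖K†‖²)‖f‖²` for `f ∈ R(K)`; in particular it is injective. -/
theorem frame_operator_bounded_below_on_range
    {H E Ω : Type*} [NormedAddCommGroup H] [InnerProductSpace ℂ H] [CompleteSpace H]
    [NormedAddCommGroup E] [InnerProductSpace ℂ E] [CompleteSpace E]
    [MeasurableSpace Ω] (μ : Measure Ω)
    (K : H →L[ℂ] H) (hK : IsClosed (LinearMap.range (K : H →ₗ[ℂ] H) : Set H))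
    (Kdag : H →L[ℂ] H) (hKdag : ∀ f ∈ LinearMap.range (K : H →ₗ[ℂ] H), K (Kdag f) = f)
    (Λ : Ω → (H →L[ℂ] E))
    (hmeas : ∀ f : H, StronglyMeasurable fun ω => Λ ω f)
    (A B : ℝ) (hA : 0 < A) (hAB : A ≤ B)
    (hframe : ∀ f : H,
      A * ‖K.adjoint f‖ ^ 2 ≤ ∫ ω, ‖Λ ω f‖ ^ 2 ∂μ ∧
      ∫ ω, ‖Λ ω f‖ ^ 2 ∂μ ≤ B * ‖f‖ ^ 2)
    (S : H →L[ℂ] H)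
    (hS : ∀ f g : H, ⟪S f, g⟫ = ∫ ω, ⟪f, (Λ ω).adjoint (Λ ω g)⟫ ∂μ) :
    (∀ f ∈ LinearMap.range (K : H →ₗ[ℂ] H),
        0 ≤ (⟪S f, f⟫).re ∧ (⟪S f, f⟫).im = 0 ∧
        A * ‖K.adjoint f‖ ^ 2 ≤ (⟪S f, f⟫).re ∧
        A / ‖Kdag‖ ^ 2 * ‖f‖ ^ 2 ≤ A * ‖K.adjoint f‖ ^ 2) ∧
    (∀ f ∈ LinearMap.range (K : H →ₗ[ℂ] H), S f = 0 → f = 0) := by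
  -- Key identity: ⟪S f, f⟫ is the (real) integral of ‖Λ ω f‖².
  have key : ∀ f : H, ⟪S f, f⟫ = ((∫ ω, ‖Λ ω f‖ ^ 2 ∂μ : ℝ) : ℂ) := by
    intro f
    rw [hS]
    have h1 : ∀ ω, ⟪f, (Λ ω).adjoint (Λ ω f)⟫ = ((‖Λ ω f‖ ^ 2 : ℝ) : ℂ) := by
      intro ω
      rw [ContinuousLinearMap.adjoint_inner_right, inner_self_eq_norm_sq_to_K]
      norm_cast
    simp_rw [h1]
    exact integral_ofReal
  -- Norm bound on the range of K.
  have hnorm : ∀ f ∈ LinearMap.range (K : H →ₗ[ℂ] H), ‖f‖ ≤ ‖Kdag‖ * ‖K.adjoint f‖ := by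
    intro f hf
    have h1 : ((‖f‖ ^ 2 : ℝ) : ℂ) = ⟪Kdag f, K.adjoint f⟫ := by
      rw [ContinuousLinearMap.adjoint_inner_right, hKdag f hf, inner_self_eq_norm_sq_to_K]
      norm_cast
    have h2 : ‖f‖ ^ 2 ≤ ‖Kdag‖ * ‖f‖ * ‖K.adjoint f‖ := by
      calc ‖f‖ ^ 2 = ‖((‖f‖ ^ 2 : ℝ) : ℂ)‖ := by
            simp [abs_of_nonneg (sq_nonneg (‖f‖))]
        _ = ‖⟪Kdag f, K.adjoint f⟫‖ := by rw [h1]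
        _ ≤ ‖Kdag f‖ * ‖K.adjoint f‖ := norm_inner_le_norm _ _
        _ ≤ ‖Kdag‖ * ‖f‖ * ‖K.adjoint f‖ := by
            gcongr
            exact Kdag.le_opNorm f
    rcases eq_or_lt_of_le (norm_nonneg f) with h0 | h0
    · rw [← h0]
      positivity
    · nlinarith
  have hsq : ∀ f ∈ LinearMap.range (K : H →ₗ[ℂ] H),
      A / ‖Kdag‖ ^ 2 * ‖f‖ ^ 2 ≤ A * ‖K.adjoint f‖ ^ 2 := by
    intro f hf
    have h1 := hnorm f hf
    rcases eq_or_lt_of_le (norm_nonneg Kdag) with h0 | h0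
    · have hle : ‖f‖ ≤ 0 := by rw [← h0] at h1; simpa using h1
      have hf0 : ‖f‖ = 0 := le_antisymm hle (norm_nonneg f)
      rw [hf0]
      have : (0:ℝ) ≤ A * ‖K.adjoint f‖ ^ 2 := by positivity
      simpa using this
    · rw [div_mul_eq_mul_div, div_le_iff₀ (by positivity)]
      nlinarith [mul_self_le_mul_self (norm_nonneg f) h1, hA.le, norm_nonneg f, norm_nonneg (K.adjoint f)]
  constructor
  · intro f hf
    have hk := key f
    have hre : (⟪S f, f⟫).re = ∫ ω, ‖Λ ω f‖ ^ 2 ∂μ := by rw [hk]; simp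
    have him : (⟪S f, f⟫).im = 0 := by rw [hk]; simp
    have hlo := (hframe f).1
    refine ⟨?_, him, ?_, hsq f hf⟩
    · rw [hre]
      have : (0:ℝ) ≤ A * ‖K.adjoint f‖ ^ 2 := by positivity
      linarith
    · rw [hre]; exact hlo
  · intro f hf hSf
    have hk := key f
    have hre : (∫ ω, ‖Λ ω f‖ ^ 2 ∂μ) = 0 := by
      have := congrArg Complex.re hk
      rw [hSf] at this
      simpa using this.symm
    have hlo := (hframe f).1
    rw [hre] at hlo
    have hx : ‖K.adjoint f‖ ^ 2 = 0 := le_antisymm (by nlinarith) (sq_nonneg _)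
    have hK0 : ‖K.adjoint f‖ = 0 := sq_eq_zero_iff.mp hx
    have := hnorm f hf
    rw [hK0] at this
    have : ‖f‖ ≤ 0 := by simpa using this
    exact norm_eq_zero.mp (le_antisymm this (norm_nonneg f))
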